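/- Under the sup-norm block-decomposition setup, every sequence (x_p) with sup_p ‖x_p‖' < ∞ (where ‖x‖' = sup_{k>0} 2^{kα} ‖Q_k x‖_E) admits a subsequence that converges in the norm of E; i.e. the embedding of the completion Ẽ' of H under ‖·‖' into E is compact. -/

import Mathlib

open MeasureTheory ProbabilityTheory Filter Topology NNReal ENNReal

/-- **Compactness of the embedding `Ẽ' ↪ E`.** Under the sup-norm block-decomposition setup,
every sequence `(x_p)` given by block expansions `x_p = Σ_k Q_k x_p`
(with `Q_k x_p = Σ_{j=n_k+1}^{n_{k+1}} a_p(j) eⱼ`) such that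
`sup_p ‖x_p‖' = sup_p sup_k 2^{kα} ‖Q_k x_p‖_E < ∞` admits a subsequence converging in the
norm of `E`. -/
theorem embedding_sup_norm_space_into_E_compact
    {E : Type*} [NormedAddCommGroup E] [NormedSpace ℝ E] [CompleteSpace E]
    [TopologicalSpace.SeparableSpace E] [MeasurableSpace E] [BorelSpace E]
    -- E is infinite dimensional
    (hEinf : ¬ FiniteDimensional ℝ E)
    -- μ is a centered Gaussian probability measure on E
    (μ : Measure E) [IsProbabilityMeasure μ]
    (hμ : ∀ ξ : E →L[ℝ] ℝ, ∃ v : ℝ≥0, μ.map ξ = gaussianReal 0 v)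
    -- X is an E-valued random variable with law μ
    {Ω : Type*} [MeasurableSpace Ω] (P : Measure Ω) [IsProbabilityMeasure P]
    (X : Ω → E) (hXm : Measurable X) (hXlaw : P.map X = μ)
    -- (gₙ) is an orthonormal basis of E'_μ: an i.i.d. sequence of N(0,1) random variables
    (g : ℕ → Ω → ℝ) (hgm : ∀ j, Measurable (g j))
    (hglaw : ∀ j, P.map (g j) = gaussianReal 0 1)
    (hgindep : iIndepFun g P)
    -- eₙ = E[X gₙ(X)] is the corresponding orthonormal system of the RKHS H
    (e : ℕ → E) (he : ∀ j, e j = ∫ ω, g j ω • X ω ∂P)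
    -- the partial sums Xₙ = Σ_{j=1}^n gⱼ eⱼ converge a.s. and in L² to X
    (hae : ∀ᵐ ω ∂P, Filter.Tendsto (fun m => ∑ j ∈ Finset.Ioc 0 m, g j ω • e j)
      Filter.atTop (𝓝 (X ω)))
    (hL2 : Filter.Tendsto (fun m => ∫ ω, ‖X ω - ∑ j ∈ Finset.Ioc 0 m, g j ω • e j‖ ^ 2 ∂P)
      Filter.atTop (𝓝 0))
    -- α > 0, and an increasing sequence (nₖ) with n₀ = 0 satisfying the tail bound
    (α : ℝ) (hα : 0 < α) (η : ℝ) (hη : 0 < η) (n : ℕ → ℕ) (hn : StrictMono n) (hn0 : n 0 = 0)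
    (htail : ∀ k : ℕ, ∫ ω, ‖X ω - ∑ j ∈ Finset.Ioc 0 (n k), g j ω • e j‖ ^ 2 ∂P
      ≤ (2 : ℝ) ^ (-(2 * (k : ℝ)) * (α + η)))
    (a : ℕ → ℕ → ℝ) (x : ℕ → E)
    (hrep : ∀ p, HasSum
      (fun k : ℕ => ∑ j ∈ Finset.Ioc (n k) (n (k + 1)), a p j • e j) (x p))
    (hbdd : ∃ M : ℝ, ∀ p, ∀ k : ℕ,
      (2 : ℝ) ^ ((k : ℝ) * α) *
        ‖∑ j ∈ Finset.Ioc (n k) (n (k + 1)), a p j • e j‖ ≤ M) :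
    ∃ φ : ℕ → ℕ, StrictMono φ ∧
      ∃ l : E, Filter.Tendsto (fun r => x (φ r)) Filter.atTop (𝓝 l) := by

  classical
  obtain ⟨M, hM⟩ := hbdd
  set b : ℕ → ℕ → E := fun p k => ∑ j ∈ Finset.Ioc (n k) (n (k + 1)), a p j • e j with hbdef
  set r : ℝ := ((2 : ℝ) ^ α)⁻¹ with hrdef
  have h2α : (1 : ℝ) < (2 : ℝ) ^ α := by
    have h := (Real.rpow_lt_rpow_left_iff (x := (2:ℝ)) (y := (0:ℝ)) (z := α) (by norm_num)).mpr hα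
    simpa [Real.rpow_zero] using h
  have hr0 : 0 < r := by rw [hrdef]; positivity
  have hr1 : r < 1 := by
    rw [hrdef, inv_lt_one_iff₀]; right; exact h2α
  have hM0 : 0 ≤ M := by
    have h := hM 0 0
    have h2 : (0 : ℝ) ≤ (2 : ℝ) ^ ((0 : ℕ) * α : ℝ) * ‖b 0 0‖ := by positivity
    exact le_trans h2 h
  have hMr : ∀ p k, ‖b p k‖ ≤ M * r ^ k := by
    intro p k
    have hpow : (2 : ℝ) ^ ((k : ℝ) * α) = ((2 : ℝ) ^ α) ^ k := by
      rw [mul_comm, Real.rpow_mul (by norm_num), Real.rpow_natCast]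
    have h := hM p k
    rw [hpow] at h
    have hpos : (0 : ℝ) < ((2 : ℝ) ^ α) ^ k := by positivity
    have := (le_div_iff₀' hpos).mpr h
    calc ‖b p k‖ ≤ M / ((2 : ℝ) ^ α) ^ k := this
      _ = M * r ^ k := by rw [hrdef, div_eq_mul_inv, inv_pow]
  -- tail estimate
  have htail' : ∀ p K, ‖x p - ∑ k ∈ Finset.range K, b p k‖ ≤ M * r ^ K * (1 - r)⁻¹ := by
    intro p K
    have hsum : HasSum (fun k => b p (k + K)) (x p - ∑ k ∈ Finset.range K, b p k) :=
      (hasSum_nat_add_iff' K).2 (hrep p)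
    have hbound : ∀ k, ‖b p (k + K)‖ ≤ M * r ^ K * r ^ k := by
      intro k
      calc ‖b p (k + K)‖ ≤ M * r ^ (k + K) := hMr p (k + K)
        _ = M * r ^ K * r ^ k := by rw [pow_add]; ring
    have hsummable : Summable (fun k : ℕ => M * r ^ K * r ^ k) :=
      (summable_geometric_of_lt_one hr0.le hr1).mul_left _
    have hnormsum : Summable (fun k => ‖b p (k + K)‖) :=
      hsummable.of_nonneg_of_le (fun k => norm_nonneg _) hbound
    calc ‖x p - ∑ k ∈ Finset.range K, b p k‖ = ‖∑' k, b p (k + K)‖ := by rw [hsum.tsum_eq]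
      _ ≤ ∑' k, ‖b p (k + K)‖ := norm_tsum_le_tsum_norm hnormsum
      _ ≤ ∑' k, M * r ^ K * r ^ k := Summable.tsum_le_tsum hbound hnormsum hsummable
      _ = M * r ^ K * (1 - r)⁻¹ := by
          rw [_root_.tsum_mul_left, tsum_geometric_of_lt_one hr0.le hr1]
  -- total boundedness of the range of x
  have htb : TotallyBounded (Set.range x) := by
    rw [Metric.totallyBounded_iff]
    intro ε hε
    have hlim : Filter.Tendsto (fun K : ℕ => M * r ^ K * (1 - r)⁻¹) Filter.atTop (𝓝 0) := by
      have h := tendsto_pow_atTop_nhds_zero_of_lt_one hr0.le hr1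
      have h2 := (h.const_mul M).mul_const (1 - r)⁻¹
      simpa using h2
    obtain ⟨K, hK⟩ := (hlim.eventually (gt_mem_nhds (half_pos hε))).exists
    -- the finite-dimensional subspace containing the partial sums
    set S : Submodule ℝ E := Submodule.span ℝ (e '' Set.Iic (n K)) with hSdef
    have hfin : FiniteDimensional ℝ S :=
      FiniteDimensional.span_of_finite ℝ ((Set.finite_Iic _).image e)
    have hsmem : ∀ p, (∑ k ∈ Finset.range K, b p k) ∈ S := by
      intro p
      refine Submodule.sum_mem _ ?_
      intro k hk
      refine Submodule.sum_mem _ ?_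
      intro j hj
      refine Submodule.smul_mem _ _ (Submodule.subset_span ⟨j, ?_, rfl⟩)
      have hjle : j ≤ n (k + 1) := (Finset.mem_Ioc.mp hj).2
      have hkK : k + 1 ≤ K := Finset.mem_range.mp hk
      exact le_trans hjle (hn.monotone hkK)
    have hsn : ∀ p, ‖∑ k ∈ Finset.range K, b p k‖ ≤ M * (1 - r)⁻¹ := by
      intro p
      calc ‖∑ k ∈ Finset.range K, b p k‖ ≤ ∑ k ∈ Finset.range K, ‖b p k‖ :=
            norm_sum_le _ _
        _ ≤ ∑ k ∈ Finset.range K, M * r ^ k := Finset.sum_le_sum fun k _ => hMr p k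
        _ ≤ ∑' k : ℕ, M * r ^ k := by
            refine Summable.sum_le_tsum _ (fun k _ => by positivity)
              ((summable_geometric_of_lt_one hr0.le hr1).mul_left _)
        _ = M * (1 - r)⁻¹ := by
            rw [_root_.tsum_mul_left, tsum_geometric_of_lt_one hr0.le hr1]
    -- the compact set of candidate partial sums
    have hA : IsCompact ((↑) '' (Metric.closedBall (0 : S) (M * (1 - r)⁻¹)) : Set E) :=
      (isCompact_closedBall _ _).image continuous_subtype_val
    have hAtb := hA.totallyBounded
    rw [Metric.totallyBounded_iff] at hAtb
    obtain ⟨t, htf, hts⟩ := hAtb (ε / 2) (half_pos hε)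
    refine ⟨t, htf, ?_⟩
    rintro _ ⟨p, rfl⟩
    have hsA : (∑ k ∈ Finset.range K, b p k)
        ∈ ((↑) '' (Metric.closedBall (0 : S) (M * (1 - r)⁻¹)) : Set E) := by
      refine ⟨⟨∑ k ∈ Finset.range K, b p k, hsmem p⟩, ?_, rfl⟩
      rw [Metric.mem_closedBall, dist_zero_right]
      exact hsn p
    obtain ⟨y, hy, hyball⟩ := Set.mem_iUnion₂.mp (hts hsA)
    refine Set.mem_iUnion₂.mpr ⟨y, hy, ?_⟩
    rw [Metric.mem_ball] at hyball ⊢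
    calc dist (x p) y ≤ dist (x p) (∑ k ∈ Finset.range K, b p k)
          + dist (∑ k ∈ Finset.range K, b p k) y := dist_triangle _ _ _
      _ < ε / 2 + ε / 2 := by
          refine add_lt_add_of_le_of_lt ?_ hyball
          rw [dist_eq_norm]
          exact le_of_lt (lt_of_le_of_lt (htail' p K) hK)
      _ = ε := add_halves ε
  have hcs : IsCompact (closure (Set.range x)) :=
    TotallyBounded.isCompact_of_isClosed htb.closure isClosed_closure
  obtain ⟨l, _, φ, hφ, hlim⟩ :=
    hcs.tendsto_subseq (fun p => subset_closure (Set.mem_range_self p))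
  exact ⟨φ, hφ, l, hlim⟩
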